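/- Let n be a positive integer, let k and l be integers, let d = gcd(n, k, l), and let p be a nonnegative integer. Let θ be the shift automorphism of G_n(k,l) and let θ' be the shift automorphism of G_{n/d}(k/d, l/d). Then θ^p has a nonidentity fixed point in G_n(k,l) if and only if d divides p and θ'^{p/d} has a nonidentity fixed point in G_{n/d}(k/d, l/d). -/

import Mathlib

namespace CPG

/-- The free group on generators `x_0, …, x_{n-1}` indexed by `ZMod n`. -/
abbrev FG (n : ℕ) := FreeGroup (ZMod n)

/-- The automorphism of the free group sending `x_j` to `x_{j+i}`. -/
def shiftA (n : ℕ) (i : ZMod n) : MulAut (FG n) :=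
  FreeGroup.freeGroupCongr (Equiv.addRight i)

/-- The shift automorphism `θ` of the free group, `x_j ↦ x_{j+1}`. -/
def shiftAut (n : ℕ) : MulAut (FG n) := shiftA n 1

/-- The `θ`-orbit of a word `w`: the relator set of the cyclic presentation `P_n(w)`. -/
def rels (n : ℕ) (w : FG n) : Set (FG n) := Set.range fun i : ZMod n => shiftA n i w

/-- The cyclically presented group `G_n(w)`. -/
abbrev Gp (n : ℕ) (w : FG n) := PresentedGroup (rels n w)

lemma shiftA_shiftA (n : ℕ) (i j : ZMod n) (x : FG n) :
    shiftA n i (shiftA n j x) = shiftA n (j + i) x := by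
  show FreeGroup.map _ (FreeGroup.map _ x) = FreeGroup.map _ x
  rw [FreeGroup.map.comp]
  have h : (⇑(Equiv.addRight i) ∘ ⇑(Equiv.addRight j)) = ⇑(Equiv.addRight (j + i)) := by
    funext z
    simp [add_assoc]
  rw [h]

lemma image_shiftAut_rels (n : ℕ) (w : FG n) :
    (shiftAut n) '' rels n w = rels n w := by
  ext r
  constructor
  · rintro ⟨s, ⟨i, rfl⟩, rfl⟩
    exact ⟨i + 1, (shiftA_shiftA n 1 i w).symm⟩
  · rintro ⟨i, rfl⟩
    refine ⟨shiftA n (i - 1) w, ⟨i - 1, rfl⟩, ?_⟩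
    rw [shiftAut, shiftA_shiftA, sub_add_cancel]

lemma map_normalClosure_rels (n : ℕ) (w : FG n) :
    (Subgroup.normalClosure (rels n w)).map (shiftAut n).toMonoidHom
      = Subgroup.normalClosure (rels n w) := by
  rw [Subgroup.map_normalClosure (rels n w) (shiftAut n).toMonoidHom (shiftAut n).surjective]
  congr 1
  exact image_shiftAut_rels n w

/-- The shift automorphism `θ` of the cyclically presented group `G_n(w)`. -/
def shiftG (n : ℕ) (w : FG n) : MulAut (Gp n w) :=
  QuotientGroup.congr (Subgroup.normalClosure (rels n w)) (Subgroup.normalClosure (rels n w))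
    (shiftAut n) (map_normalClosure_rels n w)

/-- The generator `x_k` (subscript mod `n`). -/
def xg (n : ℕ) (k : ℤ) : FG n := FreeGroup.of (k : ZMod n)

/-- The word `x_0 x_k x_l`. -/
def wkl (n : ℕ) (k l : ℤ) : FG n := xg n 0 * xg n k * xg n l

/-- The cyclically presented group `G_n(k,l) = G_n(x_0 x_k x_l)`. -/
abbrev Gkl (n : ℕ) (k l : ℤ) := Gp n (wkl n k l)

/-- The shift automorphism of `G_n(k,l)`. -/
def shiftKL (n : ℕ) (k l : ℤ) : MulAut (Gkl n k l) := shiftG n (wkl n k l)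

end CPG

namespace CPGAux
open CPG

/-- Generic congruence: the value of `(i + c).val` over `ℤ`. -/
lemma val_add_intCast (M : ℕ) [NeZero M] (i : ZMod M) (c : ℤ) :
    ∃ t : ℤ, (((i + (c : ZMod M)).val : ℤ)) = (i.val : ℤ) + c + M * t := by
  have h0 : ((((i + (c : ZMod M)).val : ℤ) - ((i.val : ℤ) + c) : ℤ) : ZMod M) = 0 := by
    push_cast
    simp [ZMod.intCast_cast, ZMod.natCast_val, ZMod.cast_id]
  rw [ZMod.intCast_zmod_eq_zero_iff_dvd] at h0
  obtain ⟨t, ht⟩ := h0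
  exact ⟨t, by linarith⟩

lemma shiftG_mk (n : ℕ) (w : FG n) (x : FG n) :
    shiftG n w (PresentedGroup.mk (rels n w) x) = PresentedGroup.mk (rels n w) (shiftAut n x) := rfl

lemma shiftG_of (n : ℕ) (w : FG n) (x : ZMod n) :
    shiftG n w (PresentedGroup.of x) = PresentedGroup.of (x + 1) := by
  have : shiftAut n (FreeGroup.of x) = FreeGroup.of (x + 1) := by
    simp [shiftAut, shiftA]
  rw [PresentedGroup.of, PresentedGroup.of, shiftG_mk, this]

/-- The generator of `Gkl n k l` indexed by an integer. -/
def XX (n : ℕ) (k l : ℤ) (a : ℤ) : Gkl n k l := PresentedGroup.of ((a : ZMod n))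

lemma shiftKL_XX (n : ℕ) (k l a : ℤ) :
    shiftKL n k l (XX n k l a) = XX n k l (a + 1) := by
  rw [XX, XX, shiftKL, shiftG_of]
  push_cast
  rfl

lemma XX_rel (n : ℕ) (k l a : ℤ) :
    XX n k l a * XX n k l (a + k) * XX n k l (a + l) = 1 := by
  set i : ZMod n := (a : ZMod n) with hi
  have hmem : shiftA n i (wkl n k l) ∈ rels n (wkl n k l) := ⟨i, rfl⟩
  have h1 : (PresentedGroup.mk (rels n (wkl n k l)) (shiftA n i (wkl n k l)) : Gkl n k l) = 1 :=
    (QuotientGroup.eq_one_iff _).mpr (Subgroup.subset_normalClosure hmem)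
  have h2 : shiftA n i (wkl n k l)
      = FreeGroup.of ((0 : ZMod n) + i) * FreeGroup.of ((k : ZMod n) + i)
        * FreeGroup.of ((l : ZMod n) + i) := by
    simp [wkl, xg, shiftA]
  rw [h2, map_mul, map_mul] at h1
  have h3 := h1
  have e0 : ((0 : ZMod n) + i) = ((a : ℤ) : ZMod n) := by push_cast; ring
  have ek : ((k : ZMod n) + i) = ((a + k : ℤ) : ZMod n) := by push_cast; ring
  have el : ((l : ZMod n) + i) = ((a + l : ℤ) : ZMod n) := by push_cast; ring
  rw [e0, ek, el] at h3
  exact h3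

lemma XX_add_n (n : ℕ) (k l a : ℤ) (t : ℤ) :
    XX n k l (a + n * t) = XX n k l a := by
  rw [XX, XX]
  congr 1
  push_cast
  simp

open CPG Monoid

lemma shiftA_xg (n : ℕ) (a : ℤ) (i : ZMod n) :
    shiftA n i (xg n a) = FreeGroup.of ((a : ZMod n) + i) := by
  simp [xg, shiftA]

section
variable (d m : ℕ) (k' l' : ℤ) [NeZero d] [NeZero m]

/-- Shift lemma for the big-group generators along multiples of `d`. -/
lemma XX_shift (b : ℤ) (i : ZMod m) (c : ℤ) :
    XX (d*m) (d*k') (d*l') ((d : ℤ) * ((i + (c : ZMod m)).val : ℕ) + b)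
      = XX (d*m) (d*k') (d*l') (((d : ℤ) * (i.val : ℕ) + b) + (d : ℤ)*c) := by
  obtain ⟨t, ht⟩ := val_add_intCast m i c
  have h : (d:ℤ) * (((i + (c : ZMod m)).val : ℕ) : ℤ) + b
      = (((d : ℤ) * (i.val : ℕ) + b) + (d:ℤ)*c) + ((d*m : ℕ) : ℤ) * t := by
    rw [ht]; push_cast; ring
  rw [h, XX_add_n]

lemma of_gen_rel (j : ZMod m) :
    (PresentedGroup.of j : Gkl m k' l') * PresentedGroup.of (j + (k' : ZMod m))
      * PresentedGroup.of (j + (l' : ZMod m)) = 1 := by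
  have h := XX_rel m k' l' (j.val : ℤ)
  have e0 : (((j.val : ℤ)) : ZMod m) = j := by
    push_cast; simp [ZMod.natCast_val, ZMod.cast_id]
  have ek : ((((j.val : ℤ) + k' : ℤ)) : ZMod m) = j + (k' : ZMod m) := by
    push_cast; simp [ZMod.natCast_val, ZMod.cast_id]
  have el : ((((j.val : ℤ) + l' : ℤ)) : ZMod m) = j + (l' : ZMod m) := by
    push_cast; simp [ZMod.natCast_val, ZMod.cast_id]
  rw [XX, XX, XX, e0, ek, el] at h
  exact h

/-- The embedding of the `r`-th copy of the small group into the big group. -/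
def psiF (r : ZMod d) : Gkl m k' l' →* Gkl (d*m) (d*k') (d*l') :=
  PresentedGroup.toGroup
    (f := fun j : ZMod m => XX (d*m) (d*k') (d*l') ((d : ℤ) * (j.val : ℕ) + (r.val : ℕ))) <| by
  rintro rel ⟨i, rfl⟩
  dsimp only
  have h2 : shiftA m i (wkl m k' l')
      = FreeGroup.of ((0 : ZMod m) + i) * FreeGroup.of ((k' : ZMod m) + i)
        * FreeGroup.of ((l' : ZMod m) + i) := by
    simp [wkl, xg, shiftA]
  rw [h2, map_mul, map_mul, FreeGroup.lift_apply_of, FreeGroup.lift_apply_of, FreeGroup.lift_apply_of]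
  rw [zero_add, add_comm (k' : ZMod m) i, add_comm (l' : ZMod m) i]
  rw [XX_shift d m k' l' _ i k', XX_shift d m k' l' _ i l']
  exact XX_rel (d*m) (d*k') (d*l') _

lemma psiF_of (r : ZMod d) (j : ZMod m) :
    psiF d m k' l' r (PresentedGroup.of j)
      = XX (d*m) (d*k') (d*l') ((d : ℤ) * (j.val : ℕ) + (r.val : ℕ)) :=
  PresentedGroup.toGroup.of _

/-- Key arithmetic for `phi`: shifting by a multiple of `d` preserves residue mod `d`
and shifts the `d`-quotient. -/
lemma div_mod_shift (i : ZMod (d*m)) (c : ℤ) :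
    ((((i + ((d*c : ℤ) : ZMod (d*m))).val : ℕ) : ZMod d) = ((i.val : ℕ) : ZMod d))
    ∧ ((((i + ((d*c : ℤ) : ZMod (d*m))).val / d : ℕ) : ZMod m)
        = ((i.val / d : ℕ) : ZMod m) + (c : ZMod m)) := by
  obtain ⟨t, ht⟩ := val_add_intCast (d*m) i (d*c)
  set vA := (i + ((d*c : ℤ) : ZMod (d*m))).val with hvA
  set vB := i.val with hvB
  have hA : d * (vA / d) + vA % d = vA := Nat.div_add_mod vA d
  have hB : d * (vB / d) + vB % d = vB := Nat.div_add_mod vB d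
  have hd0 : 0 < d := NeZero.pos d
  have hrA : vA % d < d := Nat.mod_lt _ hd0
  have hrB : vB % d < d := Nat.mod_lt _ hd0
  have hAZ : (vA : ℤ) = (d : ℤ) * ((vA / d : ℕ) : ℤ) + ((vA % d : ℕ) : ℤ) := by
    exact_mod_cast hA.symm
  have hBZ : (vB : ℤ) = (d : ℤ) * ((vB / d : ℕ) : ℤ) + ((vB % d : ℕ) : ℤ) := by
    exact_mod_cast hB.symm
  have htZ : (vA : ℤ) = (vB : ℤ) + (d : ℤ)*c + ((d : ℤ)*(m : ℤ))*t := by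
    rw [ht]; push_cast; ring
  have key : (d : ℤ) * (((vA / d : ℕ) : ℤ) - ((vB / d : ℕ) : ℤ) - c - (m : ℤ)*t)
      = ((vB % d : ℕ) : ℤ) - ((vA % d : ℕ) : ℤ) := by
    linear_combination (-1 : ℤ) * hAZ + hBZ + htZ
  have hdvd : (d : ℤ) ∣ (((vB % d : ℕ) : ℤ) - ((vA % d : ℕ) : ℤ)) := ⟨_, key.symm⟩
  have habs : |((vB % d : ℕ) : ℤ) - ((vA % d : ℕ) : ℤ)| < (d : ℤ) := by
    have h1 : ((vA % d : ℕ) : ℤ) < d := by exact_mod_cast hrA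
    have h2 : ((vB % d : ℕ) : ℤ) < d := by exact_mod_cast hrB
    have h3 : (0 : ℤ) ≤ ((vA % d : ℕ) : ℤ) := Int.natCast_nonneg _
    have h4 : (0 : ℤ) ≤ ((vB % d : ℕ) : ℤ) := Int.natCast_nonneg _
    rw [abs_lt]
    constructor <;> linarith
  have hmod0 : ((vB % d : ℕ) : ℤ) - ((vA % d : ℕ) : ℤ) = 0 :=
    Int.eq_zero_of_abs_lt_dvd hdvd habs
  have hmodeq : vA % d = vB % d := by omega
  have hq : ((vA / d : ℕ) : ℤ) = ((vB / d : ℕ) : ℤ) + c + (m : ℤ) * t := by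
    rw [hmod0] at key
    have hd0' : (d : ℤ) ≠ 0 := by exact_mod_cast hd0.ne'
    have := mul_eq_zero.mp key
    rcases this with h | h
    · exact absurd h hd0'
    · linarith
  constructor
  · calc ((vA : ℕ) : ZMod d) = ((vA % d : ℕ) : ZMod d) := (ZMod.natCast_mod _ _).symm
      _ = ((vB % d : ℕ) : ZMod d) := by rw [hmodeq]
      _ = ((vB : ℕ) : ZMod d) := ZMod.natCast_mod _ _
  · have h5 : (((vA / d : ℕ) : ℤ) : ZMod m)
        = (((vB / d : ℕ) : ℤ) : ZMod m) + ((c : ℤ) : ZMod m)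
          + ((m : ℕ) : ZMod m) * ((t : ℤ) : ZMod m) := by
      rw [hq]; push_cast; ring
    rw [Int.cast_natCast, Int.cast_natCast, ZMod.natCast_self, zero_mul, add_zero] at h5
    exact h5

/-- The decomposition map from the big group to the free product. -/
def phi : Gkl (d*m) (d*k') (d*l') →* CoprodI (fun _ : ZMod d => Gkl m k' l') :=
  PresentedGroup.toGroup
    (f := fun i : ZMod (d*m) => CoprodI.of (i := ((i.val : ℕ) : ZMod d))
      (PresentedGroup.of ((i.val / d : ℕ) : ZMod m) : Gkl m k' l')) <| by
  rintro rel ⟨i, rfl⟩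
  dsimp only
  have h2 : shiftA (d*m) i (wkl (d*m) (d*k') (d*l'))
      = FreeGroup.of ((0 : ZMod (d*m)) + i) * FreeGroup.of (((d*k' : ℤ) : ZMod (d*m)) + i)
        * FreeGroup.of (((d*l' : ℤ) : ZMod (d*m)) + i) := by
    rw [wkl, map_mul, map_mul, shiftA_xg, shiftA_xg, shiftA_xg, Int.cast_zero]
  rw [h2, map_mul, map_mul, FreeGroup.lift_apply_of, FreeGroup.lift_apply_of, FreeGroup.lift_apply_of]
  rw [zero_add, add_comm ((d*k' : ℤ) : ZMod (d*m)) i, add_comm ((d*l' : ℤ) : ZMod (d*m)) i]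
  rw [(div_mod_shift d m i k').1, (div_mod_shift d m i k').2,
    (div_mod_shift d m i l').1, (div_mod_shift d m i l').2]
  rw [← map_mul, ← map_mul, of_gen_rel m k' l', map_one]

lemma phi_of (i : ZMod (d*m)) :
    phi d m k' l' (PresentedGroup.of i)
      = CoprodI.of (i := ((i.val : ℕ) : ZMod d))
          (PresentedGroup.of ((i.val / d : ℕ) : ZMod m) : Gkl m k' l') :=
  PresentedGroup.toGroup.of _


lemma phi_psiF (r : ZMod d) (j : ZMod m) :
    phi d m k' l' (psiF d m k' l' r (PresentedGroup.of j))
      = CoprodI.of (i := r) (PresentedGroup.of j : Gkl m k' l') := by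
  rw [psiF_of]
  have hlt : d * j.val + r.val < d * m := by
    calc d * j.val + r.val < d * j.val + d := Nat.add_lt_add_left (ZMod.val_lt r) _
      _ = d * (j.val + 1) := (Nat.mul_succ d j.val).symm
      _ ≤ d * m := Nat.mul_le_mul_left d (ZMod.val_lt j)
  have hcast : ((d : ℤ) * (j.val : ℕ) + ((r.val : ℕ) : ℤ) : ℤ) = ((d * j.val + r.val : ℕ) : ℤ) := by
    push_cast; ring
  rw [XX, hcast, Int.cast_natCast, phi_of]
  have hval : ((d * j.val + r.val : ℕ) : ZMod (d*m)).val = d * j.val + r.val :=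
    ZMod.val_natCast_of_lt hlt
  rw [hval]
  have h1 : (d * j.val + r.val) / d = j.val := by
    rw [Nat.mul_add_div (NeZero.pos d), Nat.div_eq_of_lt (ZMod.val_lt r), add_zero]
  have h2 : ((d * j.val + r.val : ℕ) : ZMod d) = r := by
    push_cast
    simp [ZMod.natCast_self, ZMod.natCast_val, ZMod.cast_id]
  have h3 : ((j.val : ℕ) : ZMod m) = j := by
    simp [ZMod.natCast_val, ZMod.cast_id]
  rw [h1, h2, h3]

/-- The inverse map, from the free product to the big group. -/
def psi : CoprodI (fun _ : ZMod d => Gkl m k' l') →* Gkl (d*m) (d*k') (d*l') :=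
  CoprodI.lift (psiF d m k' l')

lemma phi_comp_psi :
    (phi d m k' l').comp (psi d m k' l') = MonoidHom.id _ := by
  refine CoprodI.ext_hom _ _ fun r => PresentedGroup.ext fun j => ?_
  simp only [MonoidHom.comp_apply, MonoidHom.id_apply, psi, CoprodI.lift_of]
  exact phi_psiF d m k' l' r j

lemma psi_comp_phi :
    (psi d m k' l').comp (phi d m k' l') = MonoidHom.id _ := by
  refine PresentedGroup.ext fun i => ?_
  simp only [MonoidHom.comp_apply, MonoidHom.id_apply]
  rw [phi_of, psi, CoprodI.lift_of, psiF_of]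
  have hjv : ((i.val / d : ℕ) : ZMod m).val = i.val / d := by
    refine ZMod.val_natCast_of_lt ?_
    rw [Nat.div_lt_iff_lt_mul (NeZero.pos d)]
    calc i.val < d * m := ZMod.val_lt i
      _ = m * d := Nat.mul_comm d m
  have hrv : ((i.val : ℕ) : ZMod d).val = i.val % d := ZMod.val_natCast _ _
  rw [hjv, hrv]
  have hcast : ((d : ℤ) * ((i.val / d : ℕ) : ℤ) + ((i.val % d : ℕ) : ℤ) : ℤ)
      = ((i.val : ℕ) : ℤ) := by
    exact_mod_cast congrArg (Nat.cast : ℕ → ℤ) (Nat.div_add_mod i.val d)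
  rw [XX, hcast, Int.cast_natCast]
  simp [ZMod.natCast_val, ZMod.cast_id]

/-- The decomposition isomorphism. -/
def Phi : Gkl (d*m) (d*k') (d*l') ≃* CoprodI (fun _ : ZMod d => Gkl m k' l') :=
  MonoidHom.toMulEquiv (phi d m k' l') (psi d m k' l')
    (psi_comp_phi d m k' l') (phi_comp_psi d m k' l')

lemma Phi_apply (x) : Phi d m k' l' x = phi d m k' l' x := rfl
lemma Phi_symm_apply (x) : (Phi d m k' l').symm x = psi d m k' l' x := rfl

/-- The shift on the free product: cycles the factors, applying the small shift on wrap-around. -/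
def ThetaHom : CoprodI (fun _ : ZMod d => Gkl m k' l') →* CoprodI (fun _ : ZMod d => Gkl m k' l') :=
  CoprodI.lift (fun r => (CoprodI.of (M := fun _ : ZMod d => Gkl m k' l') (i := r + 1)).comp
    (if r + 1 = 0 then (shiftKL m k' l').toMonoidHom else MonoidHom.id _))

lemma ThetaHom_of (r : ZMod d) (g : Gkl m k' l') :
    ThetaHom d m k' l' (CoprodI.of (i := r) g)
      = CoprodI.of (i := r + 1)
          (((if r + 1 = 0 then (shiftKL m k' l').toMonoidHom else MonoidHom.id _) :
            Gkl m k' l' →* Gkl m k' l') g) := by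
  rw [ThetaHom, CoprodI.lift_of, MonoidHom.comp_apply]

lemma val_add_one_ne (r : ZMod d) (h : r + 1 ≠ 0) : (r + 1).val = r.val + 1 := by
  have hcast : (r + 1 : ZMod d) = ((r.val + 1 : ℕ) : ZMod d) := by
    push_cast; simp [ZMod.natCast_val, ZMod.cast_id]
  have hnd : ¬ d ∣ (r.val + 1) := by
    intro hdvd
    exact h (by rw [hcast, ZMod.natCast_eq_zero_iff]; exact hdvd)
  have hlt : r.val < d := ZMod.val_lt r
  rw [hcast, ZMod.val_natCast]
  have hne : r.val + 1 ≠ d := by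
    intro hc
    rw [hc] at hnd
    exact hnd dvd_rfl
  exact Nat.mod_eq_of_lt (by omega)

lemma val_add_one_eq (r : ZMod d) (h : r + 1 = 0) : r.val + 1 = d := by
  have hcast : (r + 1 : ZMod d) = ((r.val + 1 : ℕ) : ZMod d) := by
    push_cast; simp [ZMod.natCast_val, ZMod.cast_id]
  rw [hcast, ZMod.natCast_eq_zero_iff] at h
  have hlt : r.val < d := ZMod.val_lt r
  have := Nat.le_of_dvd (Nat.succ_pos _) h
  omega

lemma theta_psi :
    (shiftKL (d*m) (d*k') (d*l')).toMonoidHom.comp (psi d m k' l')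
      = (psi d m k' l').comp (ThetaHom d m k' l') := by
  refine CoprodI.ext_hom _ _ fun r => PresentedGroup.ext fun j => ?_
  simp only [MonoidHom.comp_apply, MulEquiv.coe_toMonoidHom, psi, CoprodI.lift_of]
  rw [ThetaHom_of, psiF_of]
  have hL : shiftKL (d*m) (d*k') (d*l') (XX (d*m) (d*k') (d*l') ((d:ℤ) * (j.val : ℕ) + (r.val : ℕ)))
      = XX (d*m) (d*k') (d*l') (((d:ℤ) * (j.val : ℕ) + (r.val : ℕ)) + 1) := shiftKL_XX _ _ _ _
  rw [hL]
  by_cases h : r + 1 = 0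
  · rw [if_pos h]
    have hθ : (shiftKL m k' l').toMonoidHom (PresentedGroup.of j)
        = (PresentedGroup.of (j + 1) : Gkl m k' l') := shiftG_of m _ j
    rw [hθ, CoprodI.lift_of, psiF_of]
    obtain ⟨t, ht⟩ := val_add_intCast m j 1
    rw [Int.cast_one] at ht
    have hrv : ((r+1).val : ℕ) = 0 := by rw [h, ZMod.val_zero]
    rw [hrv]
    have hidx : (d:ℤ) * (((j + 1).val : ℕ) : ℤ) + ((0 : ℕ) : ℤ)
        = (((d:ℤ) * (j.val : ℕ) + (r.val : ℕ)) + 1) + ((d*m : ℕ) : ℤ) * t := by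
      rw [ht]
      have := val_add_one_eq d r h
      push_cast [← this]
      ring
    rw [hidx, XX_add_n]
  · rw [if_neg h, MonoidHom.id_apply, CoprodI.lift_of, psiF_of]
    congr 1
    rw [val_add_one_ne d r h]
    push_cast
    ring

/-- The shift transported to the free product. -/
def ThetaA : MulAut (CoprodI (fun _ : ZMod d => Gkl m k' l')) :=
  MulAut.congr (Phi d m k' l') (shiftKL (d*m) (d*k') (d*l'))

lemma ThetaA_eq (x) : ThetaA d m k' l' x = ThetaHom d m k' l' x := by
  have h1 : shiftKL (d*m) (d*k') (d*l') (psi d m k' l' x)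
      = psi d m k' l' (ThetaHom d m k' l' x) := by
    have := DFunLike.congr_fun (theta_psi d m k' l') x
    simpa using this
  have h2 : ∀ y, phi d m k' l' (psi d m k' l' y) = y := fun y =>
    DFunLike.congr_fun (phi_comp_psi d m k' l') y
  show Phi d m k' l' (shiftKL (d*m) (d*k') (d*l') ((Phi d m k' l').symm x)) = _
  rw [Phi_symm_apply, h1, Phi_apply, h2]

lemma zmod_natCast_val_add (r : ZMod d) (s : ℕ) :
    ((r.val + s : ℕ) : ZMod d) = r + (s : ZMod d) := by
  push_cast
  simp [ZMod.natCast_val, ZMod.cast_id]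

lemma zmod_add_eq_zero_iff (r : ZMod d) (s : ℕ) :
    r + (s : ZMod d) = 0 ↔ d ∣ (r.val + s) := by
  rw [← zmod_natCast_val_add, ZMod.natCast_eq_zero_iff]

lemma ThetaA_pow (p : ℕ) (r : ZMod d) (g : Gkl m k' l') :
    (ThetaA d m k' l' ^ p) (CoprodI.of (i := r) g)
      = CoprodI.of (i := r + (p : ZMod d))
          ((shiftKL m k' l' ^ ((r.val + p) / d)) g) := by
  induction p with
  | zero =>
    simp [Nat.div_eq_of_lt (ZMod.val_lt r)]
  | succ p ih =>
    rw [pow_succ', MulAut.mul_apply, ih, ThetaA_eq, ThetaHom_of]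
    have hidx : r + ((p + 1 : ℕ) : ZMod d) = r + (p : ZMod d) + 1 := by push_cast; ring
    have hnat : r.val + (p + 1) = (r.val + p) + 1 := by omega
    by_cases h : r + (p : ZMod d) + 1 = 0
    · rw [if_pos h]
      have hdvd : d ∣ ((r.val + p) + 1) := by
        rw [← hnat]
        refine (zmod_add_eq_zero_iff d r (p+1)).mp ?_
        push_cast
        rw [← add_assoc]
        exact h
      have hdiv : (r.val + (p + 1)) / d = (r.val + p) / d + 1 := by
        rw [hnat, Nat.succ_div, if_pos hdvd]
      rw [hidx, hdiv, pow_succ', MulAut.mul_apply]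
      rfl
    · rw [if_neg h]
      have hdvd : ¬ d ∣ ((r.val + p) + 1) := by
        intro hc
        refine h ?_
        have := (zmod_add_eq_zero_iff d r (p+1)).mpr (by rw [hnat]; exact hc)
        push_cast at this
        rw [← add_assoc] at this
        exact this
      have hdiv : (r.val + (p + 1)) / d = (r.val + p) / d := by
        rw [hnat, Nat.succ_div, if_neg hdvd, add_zero]
      rw [hidx, hdiv]
      rfl


end

section FixedPoints

open Monoid Monoid.CoprodI

variable {ι : Type*} [DecidableEq ι] {M : ι → Type*} [∀ i, Group (M i)]
  [∀ i, DecidableEq (M i)]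

lemma word_map_eq (E : CoprodI M →* CoprodI M) (σ : ι → ι) (hσ : Function.Injective σ)
    (eF : ∀ i, M i →* M (σ i)) (hinj : ∀ i, Function.Injective (eF i))
    (hE : ∀ (i : ι) (a : M i), E (CoprodI.of a) = CoprodI.of (eF i a))
    (g : CoprodI M) (hg : E g = g) :
    (Word.equiv g).toList.map (fun x => (⟨σ x.1, eF x.1 x.2⟩ : Σ i, M i))
      = (Word.equiv g).toList := by
  set w : Word M := Word.equiv g with hw
  set L' : List (Σ i, M i) := w.toList.map (fun x => ⟨σ x.1, eF x.1 x.2⟩) with hL'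
  have hne : ∀ x ∈ L', x.2 ≠ 1 := by
    rintro x hx
    rw [hL', List.mem_map] at hx
    obtain ⟨y, hy, rfl⟩ := hx
    intro hone
    have hone' : eF y.1 y.2 = 1 := hone
    refine w.ne_one y hy (hinj y.1 ?_)
    rw [hone', map_one]
  have hchain : L'.IsChain (fun a b => a.1 ≠ b.1) := by
    rw [hL', List.isChain_map]
    refine w.chain_ne.imp ?_
    intro a b hab
    exact fun hc => hab (hσ hc)
  set w' : Word M := ⟨L', hne, hchain⟩ with hw'
  have hprod : w'.prod = E g := by
    rw [Word.prod, hw']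
    show (L'.map fun x => CoprodI.of x.2).prod = E g
    rw [hL', List.map_map]
    have hfun : ((fun x : Σ i, M i => CoprodI.of x.2) ∘ (fun x : Σ i, M i => (⟨σ x.1, eF x.1 x.2⟩ : Σ i, M i)))
        = fun x : Σ i, M i => E (CoprodI.of x.2) := by
      funext x
      exact (hE x.1 x.2).symm
    rw [hfun]
    have : (w.toList.map fun x : Σ i, M i => E (CoprodI.of x.2))
        = (w.toList.map fun x : Σ i, M i => CoprodI.of x.2).map E := by
      rw [List.map_map]; rfl
    rw [this, ← map_list_prod E]
    have hpw : w.prod = g := by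
      rw [hw]
      exact Word.equiv.symm_apply_apply g
    rw [← hpw]
    rfl
  have hprodw : w.prod = g := by
    rw [hw]; exact Word.equiv.symm_apply_apply g
  have hweq : w' = w := by
    have hinj2 : Function.Injective (Word.prod (M := M)) := by
      have : (Word.prod (M := M)) = ⇑(Word.equiv (M := M)).symm := rfl
      rw [this]
      exact (Word.equiv (M := M)).symm.injective
    apply hinj2
    rw [hprod, hprodw, hg]
  have := congrArg Word.toList hweq
  exact this

lemma eq_one_of_fixed_of_no_fixed_index (E : CoprodI M →* CoprodI M) (σ : ι → ι)
    (hσ : Function.Injective σ)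
    (eF : ∀ i, M i →* M (σ i)) (hinj : ∀ i, Function.Injective (eF i))
    (hE : ∀ (i : ι) (a : M i), E (CoprodI.of a) = CoprodI.of (eF i a))
    (hnofix : ∀ i, σ i ≠ i)
    (g : CoprodI M) (hg : E g = g) : g = 1 := by
  have h := word_map_eq E σ hσ eF hinj hE g hg
  set w : Word M := Word.equiv g with hw
  cases hlist : w.toList with
  | nil =>
    have hpw : w.prod = g := by rw [hw]; exact Word.equiv.symm_apply_apply g
    rw [← hpw, Word.prod, hlist]
    rfl
  | cons x xs =>
    rw [hlist] at h
    have := congrArg (List.head?) h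
    simp only [List.map_cons, List.head?_cons, Option.some.injEq] at this
    have hfst := congrArg Sigma.fst this
    exact absurd hfst (hnofix x.1)

lemma exists_fixed_letter (E : CoprodI M →* CoprodI M)
    (eF : ∀ i, M i →* M i) (hinj : ∀ i, Function.Injective (eF i))
    (hE : ∀ (i : ι) (a : M i), E (CoprodI.of a) = CoprodI.of (eF i a))
    (g : CoprodI M) (hg : E g = g) (hg1 : g ≠ 1) :
    ∃ (i : ι) (a : M i), a ≠ 1 ∧ eF i a = a := by
  have h := word_map_eq E id Function.injective_id eF hinj hE g hg
  set w : Word M := Word.equiv g with hw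
  cases hlist : w.toList with
  | nil =>
    exfalso
    apply hg1
    have hpw : w.prod = g := by rw [hw]; exact Word.equiv.symm_apply_apply g
    rw [← hpw, Word.prod, hlist]
    rfl
  | cons x xs =>
    rw [hlist] at h
    have := congrArg (List.head?) h
    simp only [List.map_cons, List.head?_cons, Option.some.injEq] at this
    refine ⟨x.1, x.2, ?_, ?_⟩
    · exact w.ne_one x (by rw [hlist]; exact List.mem_cons_self)
    · have h2 : (⟨x.1, eF x.1 x.2⟩ : Σ i, M i) = ⟨x.1, x.2⟩ := this
      have := Sigma.mk.inj_iff.mp h2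
      exact eq_of_heq this.2

end FixedPoints
end CPGAux

open CPGAux in
theorem statement7' (n : ℕ) (hn : 0 < n) (k l : ℤ) (d : ℕ)
    (hd : d = Int.gcd (n : ℤ) (Int.gcd k l)) (p : ℕ) :
    (∃ g : CPG.Gkl n k l, g ≠ 1 ∧ (CPG.shiftKL n k l ^ p) g = g) ↔
      (d ∣ p ∧ ∃ g : CPG.Gkl (n / d) (k / (d : ℤ)) (l / (d : ℤ)), g ≠ 1 ∧
        (CPG.shiftKL (n / d) (k / (d : ℤ)) (l / (d : ℤ)) ^ (p / d)) g = g) := by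
  classical
  have hdn : d ∣ n := by
    have h : (d : ℤ) ∣ (n : ℤ) := hd ▸ Int.gcd_dvd_left _ _
    exact_mod_cast h
  have hdk : (d : ℤ) ∣ k := by
    rw [hd]; exact dvd_trans (Int.gcd_dvd_right _ _) (Int.gcd_dvd_left _ _)
  have hdl : (d : ℤ) ∣ l := by
    rw [hd]; exact dvd_trans (Int.gcd_dvd_right _ _) (Int.gcd_dvd_right _ _)
  have hd0 : 0 < d := by
    rcases Nat.eq_zero_or_pos d with h | h
    · exfalso
      rw [h] at hdn
      omega
    · exact h
  obtain ⟨m, hm⟩ := hdn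
  obtain ⟨k', hk'⟩ := hdk
  obtain ⟨l', hl'⟩ := hdl
  have hm0 : 0 < m := by
    rcases Nat.eq_zero_or_pos m with h | h
    · exfalso; rw [h, Nat.mul_zero] at hm; omega
    · exact h
  have hnd : n / d = m := by rw [hm]; exact Nat.mul_div_cancel_left m hd0
  have hkd : k / (d : ℤ) = k' := by
    rw [hk']; exact Int.mul_ediv_cancel_left _ (by exact_mod_cast hd0.ne')
  have hld : l / (d : ℤ) = l' := by
    rw [hl']; exact Int.mul_ediv_cancel_left _ (by exact_mod_cast hd0.ne')
  rw [hnd, hkd, hld]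
  subst hm hk' hl'
  haveI : NeZero d := ⟨hd0.ne'⟩
  haveI : NeZero m := ⟨hm0.ne'⟩
  set Φ := Phi d m k' l' with hΦ
  have hpow : ∀ q : ℕ, (ThetaA d m k' l') ^ q
      = MulAut.congr Φ (CPG.shiftKL (d*m) ((d : ℤ)*k') ((d : ℤ)*l') ^ q) := by
    intro q
    rw [ThetaA]
    exact (map_pow (MulAut.congr Φ) _ q).symm
  constructor
  · rintro ⟨g, hg1, hgfix⟩
    have hΦg1 : Φ g ≠ 1 := by
      intro hc
      exact hg1 (Φ.injective (by rw [hc, map_one]))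
    have hfix2 : ((ThetaA d m k' l') ^ p) (Φ g) = Φ g := by
      rw [hpow p, MulAut.congr_apply, MulEquiv.trans_apply, MulEquiv.trans_apply,
        MulEquiv.symm_apply_apply, hgfix]
    by_cases hdp : d ∣ p
    · refine ⟨hdp, ?_⟩
      have hE : ∀ (r : ZMod d) (a : CPG.Gkl m k' l'),
          (((ThetaA d m k' l') ^ p) : MulAut _).toMonoidHom (Monoid.CoprodI.of (i := r) a)
            = Monoid.CoprodI.of (i := r) ((CPG.shiftKL m k' l' ^ (p/d)).toMonoidHom a) := by
        intro r a
        have h0 : ((p : ℕ) : ZMod d) = 0 := (ZMod.natCast_eq_zero_iff p d).mpr hdp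
        have h1 := ThetaA_pow d m k' l' p r a
        rw [h0, add_zero] at h1
        obtain ⟨q, rfl⟩ := hdp
        have h2 : (r.val + d * q)/d = (d * q)/d := by
          rw [Nat.add_mul_div_left _ _ hd0, Nat.div_eq_of_lt (ZMod.val_lt r), zero_add,
            Nat.mul_div_cancel_left _ hd0]
        rw [h2] at h1
        exact h1
      obtain ⟨r, a, ha1, hafix⟩ := exists_fixed_letter
        (((ThetaA d m k' l') ^ p) : MulAut _).toMonoidHom
        (fun _ : ZMod d => (CPG.shiftKL m k' l' ^ (p/d)).toMonoidHom)
        (fun _ => (CPG.shiftKL m k' l' ^ (p/d)).injective)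
        hE (Φ g) hfix2 hΦg1
      exact ⟨a, ha1, hafix⟩
    · exfalso
      apply hΦg1
      refine eq_one_of_fixed_of_no_fixed_index
        (((ThetaA d m k' l') ^ p) : MulAut _).toMonoidHom
        (fun r => r + (p : ZMod d)) (add_left_injective _)
        (fun r => (CPG.shiftKL m k' l' ^ ((r.val + p)/d)).toMonoidHom)
        (fun r => (CPG.shiftKL m k' l' ^ ((r.val + p)/d)).injective)
        (fun r a => ThetaA_pow d m k' l' p r a)
        (fun r hc => ?_) (Φ g) hfix2
      apply hdp
      have h0 : ((p : ℕ) : ZMod d) = 0 := by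
        have := hc
        rwa [add_eq_left] at this
      exact (ZMod.natCast_eq_zero_iff p d).mp h0
  · rintro ⟨hdp, a, ha1, hafix⟩
    refine ⟨Φ.symm (Monoid.CoprodI.of (M := fun _ : ZMod d => CPG.Gkl m k' l') (i := (0 : ZMod d)) a), ?_, ?_⟩
    · intro hc
      apply ha1
      have h1 : (Monoid.CoprodI.of (M := fun _ : ZMod d => CPG.Gkl m k' l') (i := (0:ZMod d)) a) = 1 := by
        have h2 := congrArg Φ hc
        rw [MulEquiv.apply_symm_apply, map_one] at h2
        exact h2
      have h3 : (Monoid.CoprodI.of (M := fun _ : ZMod d => CPG.Gkl m k' l') (i := (0:ZMod d)) a)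
          = Monoid.CoprodI.of (M := fun _ : ZMod d => CPG.Gkl m k' l') (i := (0:ZMod d)) (1 : CPG.Gkl m k' l') := by
        rw [h1, map_one]
      exact Monoid.CoprodI.of_injective (0 : ZMod d) h3
    · have h1 : ((ThetaA d m k' l') ^ p) (Monoid.CoprodI.of (M := fun _ : ZMod d => CPG.Gkl m k' l') (i := (0 : ZMod d)) a)
          = Monoid.CoprodI.of (M := fun _ : ZMod d => CPG.Gkl m k' l') (i := (0 : ZMod d)) a := by
        rw [ThetaA_pow]
        have h0 : ((p : ℕ) : ZMod d) = 0 := (ZMod.natCast_eq_zero_iff p d).mpr hdp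
        rw [h0, add_zero]
        have h2 : ((0 : ZMod d).val + p)/d = p/d := by rw [ZMod.val_zero, Nat.zero_add]
        rw [h2, hafix]
      have h3 := congrArg Φ.symm h1
      rw [hpow p, MulAut.congr_apply, MulEquiv.trans_apply, MulEquiv.trans_apply,
        MulEquiv.symm_apply_apply] at h3
      exact h3




/-- With `d = gcd(n,k,l)`, the power `θᵖ` of the shift on `G_n(k,l)` has a
nonidentity fixed point iff `d ∣ p` and `θ'^(p/d)` has a nonidentity fixed point in
`G_{n/d}(k/d, l/d)`. -/
theorem statement7 (n : ℕ) (hn : 0 < n) (k l : ℤ) (d : ℕ)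
    (hd : d = Int.gcd (n : ℤ) (Int.gcd k l)) (p : ℕ) :
    (∃ g : CPG.Gkl n k l, g ≠ 1 ∧ (CPG.shiftKL n k l ^ p) g = g) ↔
      (d ∣ p ∧ ∃ g : CPG.Gkl (n / d) (k / (d : ℤ)) (l / (d : ℤ)), g ≠ 1 ∧
        (CPG.shiftKL (n / d) (k / (d : ℤ)) (l / (d : ℤ)) ^ (p / d)) g = g) :=
  statement7' n hn k l d hd p
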